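/- Let μ > 0, q₀ ∈ ℕ, and λ(t) = λ₀ + Σ_{k=1}^{K} (a_k sin(kt) + b_k cos(kt)) ≥ 0. Define G(α,t) = (e^α − 1)·(λ₀(1 − e^{−μt})/μ + Σ_{k=1}^{K} ((a_kμ + b_k k)sin(kt) + (b_kμ − a_k k)(cos(kt) − e^{−μt}))/(μ² + k²)) + q₀·log(e^{−μt}(e^α − 1) + 1). Then G satisfies the first-order PDE μ(1 − e^{−α})∂G/∂α + ∂G/∂t = λ(t)(e^α − 1) with initial condition G(α, 0) = α q₀. -/

import Mathlib

open Real

private lemma hd_sin (c t : ℝ) : HasDerivAt (fun s => Real.sin (c * s)) (c * Real.cos (c * t)) t := by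
  simpa [mul_comm, Function.comp_def] using (Real.hasDerivAt_sin (c * t)).comp t ((hasDerivAt_id t).const_mul c)

private lemma hd_cos (c t : ℝ) : HasDerivAt (fun s => Real.cos (c * s)) (-(c * Real.sin (c * t))) t := by
  simpa [mul_comm, Function.comp_def] using (Real.hasDerivAt_cos (c * t)).comp t ((hasDerivAt_id t).const_mul c)

private lemma hd_exp (c t : ℝ) : HasDerivAt (fun s => Real.exp (c * s)) (c * Real.exp (c * t)) t := by
  simpa [mul_comm, Function.comp_def] using (Real.hasDerivAt_exp (c * t)).comp t ((hasDerivAt_id t).const_mul c)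

/-- The cumulant generating function of an `M_t/M/∞` queue with Fourier-series arrival
rate `λ(t)`, service rate `μ`, and deterministic initial value `q₀` satisfies the
first-order PDE `μ(1 − e^{−α})∂G/∂α + ∂G/∂t = λ(t)(e^α − 1)`, `G(α,0) = αq₀`. -/
theorem mt_m_inf_cgf_pde
    (mu : ℝ) (hmu : 0 < mu) (q₀ : ℕ) (K : ℕ) (lam₀ : ℝ) (a b : ℕ → ℝ)
    (lam : ℝ → ℝ)
    (hlam : ∀ t, lam t = lam₀ + ∑ k ∈ Finset.Icc 1 K, (a k * sin (k * t) + b k * cos (k * t)))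
    (hlam_nonneg : ∀ t, 0 ≤ lam t)
    (G : ℝ → ℝ → ℝ)
    (hG : ∀ α t, G α t =
      (exp α - 1) *
        (lam₀ * (1 - exp (-mu * t)) / mu +
          ∑ k ∈ Finset.Icc 1 K,
            ((a k * mu + b k * k) * sin (k * t)
              + (b k * mu - a k * k) * (cos (k * t) - exp (-mu * t))) / (mu ^ 2 + k ^ 2))
      + (q₀ : ℝ) * Real.log (exp (-mu * t) * (exp α - 1) + 1)) :
    (∀ α t : ℝ, 0 < exp (-mu * t) * (exp α - 1) + 1 →
      mu * (1 - exp (-α)) * deriv (fun a' => G a' t) α + deriv (fun s => G α s) t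
        = lam t * (exp α - 1)) ∧
    (∀ α : ℝ, G α 0 = α * q₀) := by
  set F : ℝ → ℝ := fun t =>
    lam₀ * (1 - exp (-mu * t)) / mu +
      ∑ k ∈ Finset.Icc 1 K,
        ((a k * mu + b k * k) * sin (k * t)
          + (b k * mu - a k * k) * (cos (k * t) - exp (-mu * t))) / (mu ^ 2 + k ^ 2)
    with hF
  set F' : ℝ → ℝ := fun t =>
    lam₀ * exp (-mu * t) +
      ∑ k ∈ Finset.Icc 1 K,
        ((a k * mu + b k * k) * (k * cos (k * t))
          + (b k * mu - a k * k) * (-(k * sin (k * t)) + mu * exp (-mu * t))) / (mu ^ 2 + k ^ 2)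
    with hF'
  have hmu' : mu ≠ 0 := ne_of_gt hmu
  have hFd : ∀ t, HasDerivAt F (F' t) t := by
    intro t
    have h1 : HasDerivAt (fun s => lam₀ * (1 - exp (-mu * s)) / mu) (lam₀ * exp (-mu * t)) t := by
      have := ((hd_exp (-mu) t).const_sub 1).const_mul lam₀ |>.div_const mu
      refine this.congr_deriv ?_
      field_simp
    have h2 : ∀ k ∈ Finset.Icc 1 K, HasDerivAt (fun s =>
        ((a k * mu + b k * k) * sin (k * s)
          + (b k * mu - a k * k) * (cos (k * s) - exp (-mu * s))) / (mu ^ 2 + k ^ 2))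
        (((a k * mu + b k * k) * (k * cos (k * t))
          + (b k * mu - a k * k) * (-(k * sin (k * t)) + mu * exp (-mu * t))) / (mu ^ 2 + k ^ 2)) t := by
      intro k _
      have hs := (hd_sin k t).const_mul (a k * mu + b k * k)
      have hc := ((hd_cos k t).sub (hd_exp (-mu) t)).const_mul (b k * mu - a k * k)
      have := (hs.add hc).div_const (mu ^ 2 + (k : ℝ) ^ 2)
      refine this.congr_deriv ?_
      ring
    exact h1.add (HasDerivAt.fun_sum h2)
  have hkey : ∀ t, mu * F t + F' t = lam t := by
    intro t
    rw [hlam, hF, hF']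
    simp only
    rw [mul_add, Finset.mul_sum, add_add_add_comm, ← Finset.sum_add_distrib]
    congr 1
    · field_simp
      ring
    · refine Finset.sum_congr rfl fun k _ => ?_
      have hk : mu ^ 2 + (k : ℝ) ^ 2 ≠ 0 := by positivity
      field_simp
      ring
  refine ⟨fun α t hD => ?_, fun α => ?_⟩
  · have hDne : exp (-mu * t) * (exp α - 1) + 1 ≠ 0 := ne_of_gt hD
    -- derivative in α
    have hα : HasDerivAt (fun a' => G a' t)
        (exp α * F t + (q₀ : ℝ) * (exp (-mu * t) * exp α / (exp (-mu * t) * (exp α - 1) + 1))) α := by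
      have h1 : HasDerivAt (fun a' => (exp a' - 1) * F t) (exp α * F t) α :=
        ((Real.hasDerivAt_exp α).sub_const 1).mul_const (F t)
      have hin : HasDerivAt (fun a' => exp (-mu * t) * (exp a' - 1) + 1)
          (exp (-mu * t) * exp α) α :=
        (((Real.hasDerivAt_exp α).sub_const 1).const_mul (exp (-mu * t))).add_const 1
      have h2 := (hin.log hDne).const_mul (q₀ : ℝ)
      exact (h1.add h2).congr_of_eventuallyEq
        (Filter.Eventually.of_forall fun a' => hG a' t)
    -- derivative in t
    have ht : HasDerivAt (fun s => G α s)
        ((exp α - 1) * F' t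
          + (q₀ : ℝ) * ((-mu * exp (-mu * t)) * (exp α - 1) / (exp (-mu * t) * (exp α - 1) + 1))) t := by
      have h1 : HasDerivAt (fun s => (exp α - 1) * F s) ((exp α - 1) * F' t) t :=
        (hFd t).const_mul (exp α - 1)
      have hin : HasDerivAt (fun s => exp (-mu * s) * (exp α - 1) + 1)
          ((-mu * exp (-mu * t)) * (exp α - 1)) t :=
        ((hd_exp (-mu) t).mul_const (exp α - 1)).add_const 1
      have h2 := (hin.log hDne).const_mul (q₀ : ℝ)
      exact (h1.add h2).congr_of_eventuallyEq
        (Filter.Eventually.of_forall fun s => hG α s)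
    rw [hα.deriv, ht.deriv]
    have hexpα : exp (-α) * exp α = 1 := by
      rw [← Real.exp_add]; simp
    have hk := hkey t
    linear_combination (exp α - 1) * hk
      - (mu * F t + mu * (q₀ : ℝ) * exp (-mu * t) / (exp (-mu * t) * (exp α - 1) + 1)) * hexpα
  · have : G α 0 = (exp α - 1) * F 0 + (q₀ : ℝ) * Real.log (exp α) := by
      rw [hG]; simp [hF]
    rw [this, hF]
    simp [Real.log_exp]
    ring
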